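/- arXiv:1010.2731 — 4 statements merged into one kernel-verified Lean document; each statement's English description precedes it below -/
import Mathlib

section
/- Let R be a norm on ℝ^p that is decomposable with respect to a pair of subspaces (M, B^⊥) with M ⊆ B̄. Then for any vectors θ* and Δ in ℝ^p, R(θ* + Δ) − R(θ*) ≥ R(Π_{B^⊥}(Δ)) − R(Π_{B̄}(Δ)) − 2 R(Π_{M^⊥}(θ*)), where Π denotes orthogonal projection onto the indicated subspace. -/
/-- For a decomposable norm `R` with respect to `(M, Bᗮ)` with `M ⊆ B`,
the regularizer deviation inequality
`R(θ* + Δ) − R(θ*) ≥ R(Π_{Bᗮ} Δ) − R(Π_B Δ) − 2 R(Π_{Mᗮ} θ*)` holds. -/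
theorem reg_deviation (p : ℕ) (R : EuclideanSpace ℝ (Fin p) → ℝ)
    (hR_nonneg : ∀ x, 0 ≤ R x)
    (hR_add : ∀ x y, R (x + y) ≤ R x + R y)
    (hR_smul : ∀ (c : ℝ) (x), R (c • x) = |c| * R x)
    (hR_def : ∀ x, R x = 0 ↔ x = 0)
    (M B : Submodule ℝ (EuclideanSpace ℝ (Fin p))) (hMB : M ≤ B)
    (hdecomp : ∀ θ ∈ M, ∀ γ ∈ Bᗮ, R (θ + γ) = R θ + R γ)
    (θs Δ : EuclideanSpace ℝ (Fin p)) :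
    R (θs + Δ) - R θs ≥
      R ((Submodule.orthogonalProjectionOnto Bᗮ Δ : EuclideanSpace ℝ (Fin p)))
        - R ((Submodule.orthogonalProjectionOnto B Δ : EuclideanSpace ℝ (Fin p)))
        - 2 * R ((Submodule.orthogonalProjectionOnto Mᗮ θs : EuclideanSpace ℝ (Fin p))) := by
  set θM : EuclideanSpace ℝ (Fin p) := (Submodule.orthogonalProjectionOnto M θs : EuclideanSpace ℝ (Fin p))
  set θMp : EuclideanSpace ℝ (Fin p) := (Submodule.orthogonalProjectionOnto Mᗮ θs : EuclideanSpace ℝ (Fin p))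
  set ΔB : EuclideanSpace ℝ (Fin p) := (Submodule.orthogonalProjectionOnto B Δ : EuclideanSpace ℝ (Fin p))
  set ΔBp : EuclideanSpace ℝ (Fin p) := (Submodule.orthogonalProjectionOnto Bᗮ Δ : EuclideanSpace ℝ (Fin p))
  have hθ : θM + θMp = θs := M.starProjection_add_starProjection_orthogonal θs
  have hΔ : ΔB + ΔBp = Δ := B.starProjection_add_starProjection_orthogonal Δ
  have hneg : ∀ x, R (-x) = R x := by
    intro x
    have := hR_smul (-1) x
    simpa using this
  have hdec : R (θM + ΔBp) = R θM + R ΔBp :=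
    hdecomp θM (Submodule.orthogonalProjectionOnto M θs).2 ΔBp (Submodule.orthogonalProjectionOnto Bᗮ Δ).2
  have h1 : R (θM + ΔBp) ≤ R (θs + Δ) + R θMp + R ΔB := by
    have heq : θM + ΔBp = (θs + Δ) + (-θMp) + (-ΔB) := by
      rw [← hθ, ← hΔ]; abel
    calc R (θM + ΔBp) = R ((θs + Δ) + (-θMp) + (-ΔB)) := by rw [heq]
      _ ≤ R ((θs + Δ) + (-θMp)) + R (-ΔB) := hR_add _ _
      _ ≤ R (θs + Δ) + R (-θMp) + R (-ΔB) := by linarith [hR_add (θs + Δ) (-θMp)]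
      _ = R (θs + Δ) + R θMp + R ΔB := by rw [hneg, hneg]
  have h2 : R θs ≤ R θM + R θMp := by
    rw [← hθ]; exact hR_add _ _
  linarith [hdec, h1, h2]
end

section
/- Let L : ℝ^p → ℝ be convex and differentiable, R a norm decomposable with respect to subspaces (M, B^⊥) with M ⊆ B̄, and λ > 0 with λ ≥ 2 R*(∇L(θ*)). Then for any minimizer θ̂ of θ ↦ L(θ) + λ R(θ), the error Δ̂ = θ̂ − θ* satisfies R(Π_{B^⊥}(Δ̂)) ≤ 3 R(Π_{B̄}(Δ̂)) + 4 R(Π_{M^⊥}(θ*)). -/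
open scoped RealInnerProductSpace

-- aux: norm lower bound for a finite-dimensional norm
lemma aux_norm_le (p : ℕ) (R : EuclideanSpace ℝ (Fin p) → ℝ)
    (hR_nonneg : ∀ x, 0 ≤ R x)
    (hR_add : ∀ x y, R (x + y) ≤ R x + R y)
    (hR_smul : ∀ (c : ℝ) (x), R (c • x) = |c| * R x)
    (hR_def : ∀ x, R x = 0 ↔ x = 0) :
    ∃ C : ℝ, 0 ≤ C ∧ ∀ x, ‖x‖ ≤ C * R x := by
  have hR0 : R 0 = 0 := by simpa using hR_smul 0 0
  -- upper bound: R x ≤ C' * ‖x‖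
  set b := EuclideanSpace.basisFun (Fin p) ℝ with hb
  set C' : ℝ := ∑ i, R (b i) with hC'
  have hcoord : ∀ (x : EuclideanSpace ℝ (Fin p)) (i : Fin p), |x i| ≤ ‖x‖ := by
    intro x i
    have h1 : ⟪EuclideanSpace.single i (1:ℝ), x⟫ = x i := by
      simp [EuclideanSpace.inner_single_left]
    have h2 := abs_real_inner_le_norm (EuclideanSpace.single i (1:ℝ)) x
    rwa [h1, EuclideanSpace.norm_single, norm_one, one_mul] at h2
  have hupper : ∀ x : EuclideanSpace ℝ (Fin p), R x ≤ C' * ‖x‖ := by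
    intro x
    have hrepr : x = ∑ i, x i • b i := by
      have := b.sum_repr x
      simpa [hb] using this.symm
    calc R x = R (∑ i, x i • b i) := by rw [← hrepr]
      _ ≤ ∑ i, R (x i • b i) :=
          Finset.le_sum_of_subadditive R hR0.le hR_add _ _
      _ ≤ ∑ i, ‖x‖ * R (b i) := by
          refine Finset.sum_le_sum fun i _ => ?_
          rw [hR_smul]
          exact mul_le_mul_of_nonneg_right (hcoord x i) (hR_nonneg _)
      _ = C' * ‖x‖ := by rw [← Finset.mul_sum, mul_comm]
  have hneg : ∀ x : EuclideanSpace ℝ (Fin p), R (-x) = R x := by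
    intro x
    have := hR_smul (-1) x
    simpa using this
  have hcont : Continuous R := by
    have hlip : LipschitzWith (Real.toNNReal C') R := by
      apply LipschitzWith.of_dist_le_mul
      intro x y
      have h1 : R x - R y ≤ R (x - y) := by
        have := hR_add (x - y) y
        simp at this; linarith
      have h2 : R y - R x ≤ R (x - y) := by
        have := hR_add (y - x) x
        have h3 : R (y - x) = R (x - y) := by
          rw [← hneg (y - x)]; congr 1; abel
        simp at this; linarith
      have h4 : R (x - y) ≤ C' * ‖x - y‖ := hupper _
      have hC'0 : 0 ≤ C' := Finset.sum_nonneg fun i _ => hR_nonneg _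
      rw [Real.dist_eq, Real.coe_toNNReal _ hC'0, dist_eq_norm]
      rw [abs_le]; constructor <;> linarith
    exact hlip.continuous
  by_cases hp : ∃ z : EuclideanSpace ℝ (Fin p), z ≠ 0
  · obtain ⟨z, hz⟩ := hp
    have hsne : (Metric.sphere (0:EuclideanSpace ℝ (Fin p)) 1).Nonempty := ⟨‖z‖⁻¹ • z, by
      simp [norm_smul, abs_inv, inv_mul_cancel₀ (norm_ne_zero_iff.mpr hz)]⟩
    obtain ⟨w, hw, hwmin⟩ := (isCompact_sphere (0:EuclideanSpace ℝ (Fin p)) 1).exists_isMinOn hsne hcont.continuousOn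
    have hw1 : ‖w‖ = 1 := by simpa using hw
    have hwne : w ≠ 0 := by intro h; rw [h] at hw1; simp at hw1
    have hm : 0 < R w := lt_of_le_of_ne (hR_nonneg w) (fun h => hwne ((hR_def w).mp h.symm))
    refine ⟨(R w)⁻¹, inv_nonneg.mpr hm.le, fun x => ?_⟩
    by_cases hx : x = 0
    · simp [hx, hR0]
    · have hxn : (0:ℝ) < ‖x‖ := norm_pos_iff.mpr hx
      have hmem : ‖x‖⁻¹ • x ∈ Metric.sphere (0:EuclideanSpace ℝ (Fin p)) 1 := by
        simp [norm_smul, abs_inv, inv_mul_cancel₀ hxn.ne']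
      have hle : R w ≤ ‖x‖⁻¹ * R x := by
        have h := hwmin hmem
        simp only [Set.mem_setOf_eq] at h
        rwa [hR_smul, abs_inv, abs_of_pos hxn] at h
      rw [inv_mul_eq_div, le_div_iff₀ hm]
      calc ‖x‖ * R w ≤ ‖x‖ * (‖x‖⁻¹ * R x) := by
            exact mul_le_mul_of_nonneg_left hle hxn.le
        _ = R x := by field_simp
  · push_neg at hp
    exact ⟨0, le_refl _, fun x => by simp [hp x]⟩
lemma aux_grad_convex (p : ℕ) (L : EuclideanSpace ℝ (Fin p) → ℝ)
    (hconv : ConvexOn ℝ Set.univ L) (hdiff : Differentiable ℝ L)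
    (x y : EuclideanSpace ℝ (Fin p)) :
    L x + ⟪y - x, gradient L x⟫ ≤ L y := by
  set c : ℝ → EuclideanSpace ℝ (Fin p) := fun t => x + t • (y - x) with hc
  have hφconv : ConvexOn ℝ Set.univ (L ∘ c) := by
    have h := hconv.comp_affineMap (AffineMap.lineMap x y)
    have he : (L ∘ c) = L ∘ (AffineMap.lineMap x y : ℝ →ᵃ[ℝ] EuclideanSpace ℝ (Fin p)) := by
      funext t
      show L (x + t • (y - x)) = L (AffineMap.lineMap x y t)
      rw [AffineMap.lineMap_apply_module]
      congr 1
      module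
    rw [he]
    simpa using h
  have hcd : ∀ t : ℝ, HasDerivAt c (y - x) t := by
    intro t
    have h1 : HasDerivAt (fun t : ℝ => t • (y - x)) ((1:ℝ) • (y - x)) t :=
      (hasDerivAt_id t).smul_const (y - x)
    rw [one_smul] at h1
    simpa [hc] using h1.const_add x
  have hd0 : HasDerivAt (L ∘ c) (fderiv ℝ L x (y - x)) 0 := by
    have h := ((hdiff (c 0)).hasFDerivAt).comp_hasDerivAt 0 (hcd 0)
    have hc0 : c 0 = x := by simp [hc]
    rwa [hc0] at h
  have hslope := hφconv.le_slope_of_hasDerivAt (Set.mem_univ (0:ℝ)) (Set.mem_univ (1:ℝ))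
    one_pos hd0
  have hs : slope (L ∘ c) 0 1 = L y - L x := by
    simp [slope_def_field, hc]
  rw [hs] at hslope
  have hg : ⟪y - x, gradient L x⟫ = fderiv ℝ L x (y - x) := by
    rw [real_inner_comm]
    exact InnerProductSpace.toDual_symm_apply
  linarith [hg ▸ hslope]


/-- Lemma 1 of the paper: for a decomposable regularizer and `λ ≥ 2R*(∇L(θ*))`,
the error `Δ̂ = θ̂ − θ*` of any minimizer of `L + λR` satisfies
`R(Π_{Bᗮ} Δ̂) ≤ 3 R(Π_B Δ̂) + 4 R(Π_{Mᗮ} θ*)`. -/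
theorem error_in_cone (p : ℕ) (L R : EuclideanSpace ℝ (Fin p) → ℝ)
    (hR_nonneg : ∀ x, 0 ≤ R x)
    (hR_add : ∀ x y, R (x + y) ≤ R x + R y)
    (hR_smul : ∀ (c : ℝ) (x), R (c • x) = |c| * R x)
    (hR_def : ∀ x, R x = 0 ↔ x = 0)
    (M B : Submodule ℝ (EuclideanSpace ℝ (Fin p))) (hMB : M ≤ B)
    (hdecomp : ∀ θ ∈ M, ∀ γ ∈ Bᗮ, R (θ + γ) = R θ + R γ)
    (hconv : ConvexOn ℝ Set.univ L) (hdiff : Differentiable ℝ L)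
    (θs θhat : EuclideanSpace ℝ (Fin p)) (lam : ℝ) (hlam_pos : 0 < lam)
    (hlam : 2 * sSup {x : ℝ | ∃ u, R u ≤ 1 ∧
        x = @inner ℝ _ _ u (gradient L θs)} ≤ lam)
    (hmin : ∀ θ, L θhat + lam * R θhat ≤ L θ + lam * R θ) :
    R ((Submodule.orthogonalProjectionOnto Bᗮ (θhat - θs) : EuclideanSpace ℝ (Fin p))) ≤
      3 * R ((Submodule.orthogonalProjectionOnto B (θhat - θs) : EuclideanSpace ℝ (Fin p))) +
        4 * R ((Submodule.orthogonalProjectionOnto Mᗮ θs : EuclideanSpace ℝ (Fin p))) := by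
  have hR0 : R 0 = 0 := by simpa using hR_smul 0 0
  have hneg : ∀ x, R (-x) = R x := fun x => by simpa using hR_smul (-1) x
  obtain ⟨C, hC0, hCb⟩ := aux_norm_le p R hR_nonneg hR_add hR_smul hR_def
  set g : EuclideanSpace ℝ (Fin p) := gradient L θs with hg
  set S : Set ℝ := {x : ℝ | ∃ u, R u ≤ 1 ∧ x = @inner ℝ _ _ u (gradient L θs)} with hS
  have hS0 : (0:ℝ) ∈ S := ⟨0, by rw [hR0]; norm_num, by simp⟩
  have hBdd : BddAbove S := by
    refine ⟨C * ‖g‖, fun x hx => ?_⟩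
    obtain ⟨u, hu, rfl⟩ := hx
    have h1 : ⟪u, g⟫ ≤ ‖u‖ * ‖g‖ := real_inner_le_norm u g
    have h2 : ‖u‖ ≤ C * R u := hCb u
    have h3 : ‖g‖ ≥ 0 := norm_nonneg g
    rw [← hg]
    nlinarith [hR_nonneg u, mul_le_mul_of_nonneg_right h2 h3,
      mul_le_mul_of_nonneg_left hu (mul_nonneg hC0 h3)]
  have hsupnn : 0 ≤ sSup S := le_csSup hBdd hS0
  have hsup_le : sSup S ≤ lam / 2 := by linarith
  have hdual : ∀ v, -⟪v, g⟫ ≤ sSup S * R v := by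
    intro v
    by_cases hv : R v = 0
    · have hv0 : v = 0 := (hR_def v).mp hv
      subst hv0
      simp [hv]
    · have hvpos : 0 < R v := lt_of_le_of_ne (hR_nonneg v) (Ne.symm hv)
      have hmem : (-(R v)⁻¹ * ⟪v, g⟫ : ℝ) ∈ S := by
        refine ⟨(-(R v)⁻¹) • v, ?_, ?_⟩
        · rw [hR_smul, abs_neg, abs_inv, abs_of_pos hvpos]
          exact le_of_eq (inv_mul_cancel₀ hv)
        · rw [real_inner_smul_left]
      have h1 : -(R v)⁻¹ * ⟪v, g⟫ ≤ sSup S := le_csSup hBdd hmem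
      have h2 : R v * (-(R v)⁻¹ * ⟪v, g⟫) ≤ R v * sSup S :=
        mul_le_mul_of_nonneg_left h1 hvpos.le
      have h3 : R v * (-(R v)⁻¹ * ⟪v, g⟫) = -⟪v, g⟫ := by
        field_simp
      have h4 : R v * sSup S = sSup S * R v := mul_comm _ _
      linarith
  have hgrad : L θs + ⟪θhat - θs, g⟫ ≤ L θhat :=
    aux_grad_convex p L hconv hdiff θs θhat
  -- key inequality : R θhat ≤ R θs + (1/2) R Δ
  have key : R θhat ≤ R θs + (1/2) * R (θhat - θs) := by
    have h1 := hmin θs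
    have h2 := hdual (θhat - θs)
    have h3 : sSup S * R (θhat - θs) ≤ (lam/2) * R (θhat - θs) :=
      mul_le_mul_of_nonneg_right hsup_le (hR_nonneg _)
    have h5 : lam * R θhat ≤ lam * (R θs + (1/2) * R (θhat - θs)) := by nlinarith
    exact le_of_mul_le_mul_left h5 hlam_pos
  -- projections
  set ΔB : EuclideanSpace ℝ (Fin p) :=
    (Submodule.orthogonalProjectionOnto B (θhat - θs) : EuclideanSpace ℝ (Fin p)) with hΔB
  set ΔBp : EuclideanSpace ℝ (Fin p) :=
    (Submodule.orthogonalProjectionOnto Bᗮ (θhat - θs) : EuclideanSpace ℝ (Fin p)) with hΔBp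
  set θM : EuclideanSpace ℝ (Fin p) :=
    (Submodule.orthogonalProjectionOnto M θs : EuclideanSpace ℝ (Fin p)) with hθM
  set θMp : EuclideanSpace ℝ (Fin p) :=
    (Submodule.orthogonalProjectionOnto Mᗮ θs : EuclideanSpace ℝ (Fin p)) with hθMp
  have hsplitΔ : ΔB + ΔBp = θhat - θs :=
    Submodule.starProjection_add_starProjection_orthogonal (K := B) (θhat - θs)
  have hsplitθ : θM + θMp = θs :=
    Submodule.starProjection_add_starProjection_orthogonal (K := M) θs
  have hdec : R (θM + ΔBp) = R θM + R ΔBp :=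
    hdecomp θM (SetLike.coe_mem _) ΔBp (SetLike.coe_mem _)
  have hsum : θhat = (θM + ΔBp) + (θMp + ΔB) := by
    calc θhat = θs + (θhat - θs) := by abel
      _ = (θM + θMp) + (ΔB + ΔBp) := by rw [hsplitθ, hsplitΔ]
      _ = (θM + ΔBp) + (θMp + ΔB) := by abel
  have hlow : R (θM + ΔBp) ≤ R θhat + (R θMp + R ΔB) := by
    have he : θM + ΔBp = θhat + (-(θMp + ΔB)) := by rw [hsum]; abel
    calc R (θM + ΔBp) = R (θhat + (-(θMp + ΔB))) := by rw [he]
      _ ≤ R θhat + R (-(θMp + ΔB)) := hR_add _ _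
      _ = R θhat + R (θMp + ΔB) := by rw [hneg]
      _ ≤ R θhat + (R θMp + R ΔB) := by linarith [hR_add θMp ΔB]
  have e1 : R θs ≤ R θM + R θMp := by
    rw [← hsplitθ]; exact hR_add _ _
  have e2 : R (θhat - θs) ≤ R ΔB + R ΔBp := by
    rw [← hsplitΔ]; exact hR_add _ _
  linarith [hdec ▸ hlow, key, e1, e2]
end

section
/- (Exactly sparse case of the main theorem.) Under the hypotheses of the preceding theorem with additionally θ* ∈ M and τ = 0, any minimizer θ̂ of L(θ) + λR(θ) satisfies ‖θ̂ − θ*‖² ≤ 9(λ²/κ²)Ψ(B̄)² and R(θ̂ − θ*) ≤ 12(λ/κ)Ψ(B̄)². -/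
lemma aux_convex_grad {E : Type*} [NormedAddCommGroup E] [InnerProductSpace ℝ E]
    [CompleteSpace E] {L : E → ℝ} (hconv : ConvexOn ℝ Set.univ L)
    (hdiff : Differentiable ℝ L) (x y : E) :
    (inner ℝ (gradient L x) (y - x) : ℝ) ≤ L y - L x := by
  set v := y - x with hv
  have hline : HasDerivAt (fun t : ℝ => x + t • v) v 0 := by
    simpa using ((hasDerivAt_id (0 : ℝ)).smul_const v).const_add x
  have hgrad : HasFDerivAt L ((InnerProductSpace.toDual ℝ E) (gradient L x)) x := by
    have h := (hdiff x).hasGradientAt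
    rwa [hasGradientAt_iff_hasFDerivAt] at h
  have h0 : x + (0 : ℝ) • v = x := by simp
  have hd : HasDerivAt (fun t : ℝ => L (x + t • v))
      ((InnerProductSpace.toDual ℝ E) (gradient L x) v) 0 := by
    have hgrad' : HasFDerivAt L ((InnerProductSpace.toDual ℝ E) (gradient L x))
        ((fun t : ℝ => x + t • v) 0) := by
      simpa using hgrad
    exact hgrad'.comp_hasDerivAt 0 hline
  have hg : ConvexOn ℝ Set.univ (fun t : ℝ => L (x + t • v)) := by
    refine ⟨convex_univ, ?_⟩
    intro a _ b _ ta tb hta htb hab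
    have hx : ta • x + tb • x = x := by rw [← add_smul, hab, one_smul]
    have key : ta • (x + a • v) + tb • (x + b • v) = x + (ta • a + tb • b) • v := by
      calc ta • (x + a • v) + tb • (x + b • v)
          = (ta • x + tb • x) + (ta • (a • v) + tb • (b • v)) := by
            simp only [smul_add]; abel
        _ = x + (ta • a + tb • b) • v := by
            rw [hx, add_smul, smul_eq_mul, smul_eq_mul, mul_smul, mul_smul]
    simp only [← key]
    exact hconv.2 (Set.mem_univ _) (Set.mem_univ _) hta htb hab
  have hs := hg.le_slope_of_hasDerivAt (Set.mem_univ (0:ℝ)) (Set.mem_univ (1:ℝ)) one_pos hd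
  rw [slope_def_field] at hs
  have e1 : x + (1 : ℝ) • v = y := by rw [one_smul, hv]; abel
  rw [e1, h0] at hs
  simpa [InnerProductSpace.toDual_apply_apply] using hs

set_option maxHeartbeats 2000000 in
/-- Corollary for the exactly sparse case: if moreover `θ* ∈ M` and the RSC
tolerance is zero over the cone `{Δ : R(Π_{Bᗮ}Δ) ≤ 3R(Π_B Δ)}`, then any
minimizer `θ̂` of `L + λR` satisfies `‖θ̂ − θ*‖² ≤ 9(λ²/κ²)Ψ(B)²` and
`R(θ̂ − θ*) ≤ 12(λ/κ)Ψ(B)²`. -/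
theorem corollary_exact (p : ℕ) (L R : EuclideanSpace ℝ (Fin p) → ℝ)
    (hR_nonneg : ∀ x, 0 ≤ R x)
    (hR_add : ∀ x y, R (x + y) ≤ R x + R y)
    (hR_smul : ∀ (c : ℝ) (x), R (c • x) = |c| * R x)
    (hR_def : ∀ x, R x = 0 ↔ x = 0)
    (M B : Submodule ℝ (EuclideanSpace ℝ (Fin p))) (hMB : M ≤ B)
    (hdecomp : ∀ θ ∈ M, ∀ γ ∈ Bᗮ, R (θ + γ) = R θ + R γ)
    (hconv : ConvexOn ℝ Set.univ L) (hdiff : Differentiable ℝ L)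
    (θs θhat : EuclideanSpace ℝ (Fin p)) (hθs : θs ∈ M) (lam κ : ℝ)
    (hlam_pos : 0 < lam) (hκ : 0 < κ)
    (hlam : 2 * sSup {x : ℝ | ∃ u, R u ≤ 1 ∧
        x = @inner ℝ _ _ u (gradient L θs)} ≤ lam)
    (hRSC : ∀ Δ : EuclideanSpace ℝ (Fin p),
      R ((Submodule.orthogonalProjectionOnto Bᗮ Δ : EuclideanSpace ℝ (Fin p))) ≤
          3 * R ((Submodule.orthogonalProjectionOnto B Δ : EuclideanSpace ℝ (Fin p))) →
        L (θs + Δ) - L θs - @inner ℝ _ _ (gradient L θs) Δ ≥ κ * ‖Δ‖ ^ 2)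
    (hmin : ∀ θ, L θhat + lam * R θhat ≤ L θ + lam * R θ) :
    ‖θhat - θs‖ ^ 2 ≤
        9 * (lam ^ 2 / κ ^ 2) *
          (sSup {x : ℝ | ∃ u ∈ B, u ≠ 0 ∧ x = R u / ‖u‖}) ^ 2 ∧
      R (θhat - θs) ≤
        12 * (lam / κ) * (sSup {x : ℝ | ∃ u ∈ B, u ≠ 0 ∧ x = R u / ‖u‖}) ^ 2 := by
  classical
  set Ψ : ℝ := sSup {x : ℝ | ∃ u ∈ B, u ≠ 0 ∧ x = R u / ‖u‖} with hΨdef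
  have hR0 : R 0 = 0 := by simpa using hR_smul 0 0
  have hRneg : ∀ x, R (-x) = R x := by
    intro x; simpa using hR_smul (-1) x
  -- upper bound : R u ≤ C * ‖u‖
  obtain ⟨C, hC0, hCub⟩ : ∃ C : ℝ, 0 ≤ C ∧ ∀ u : EuclideanSpace ℝ (Fin p), R u ≤ C * ‖u‖ := by
    refine ⟨∑ i : Fin p, R (EuclideanSpace.single i 1), Finset.sum_nonneg fun i _ => hR_nonneg _, ?_⟩
    intro u
    have hdecu : u = ∑ i : Fin p, (u i) • (EuclideanSpace.single i (1:ℝ)) := by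
      have h := (EuclideanSpace.basisFun (Fin p) ℝ).sum_repr u
      simp only [EuclideanSpace.basisFun_apply, EuclideanSpace.basisFun_repr] at h
      exact h.symm
    calc R u = R (∑ i : Fin p, (u i) • (EuclideanSpace.single i (1:ℝ))) := by rw [← hdecu]
      _ ≤ ∑ i : Fin p, R ((u i) • (EuclideanSpace.single i (1:ℝ))) :=
          Finset.le_sum_of_subadditive R hR0.le hR_add _ _
      _ = ∑ i : Fin p, |u i| * R (EuclideanSpace.single i (1:ℝ)) := by
          simp [hR_smul]
      _ ≤ ∑ i : Fin p, ‖u‖ * R (EuclideanSpace.single i (1:ℝ)) := by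
          refine Finset.sum_le_sum fun i _ => ?_
          have h1 : |u i| ≤ ‖u‖ := by
            rw [EuclideanSpace.norm_eq]
            have e : |u i| = Real.sqrt (‖u i‖ ^ 2) := by
              rw [Real.sqrt_sq_eq_abs, Real.norm_eq_abs, abs_abs]
            rw [e]
            exact Real.sqrt_le_sqrt (Finset.single_le_sum
              (fun j _ => sq_nonneg ‖u j‖) (Finset.mem_univ i))
          exact mul_le_mul_of_nonneg_right h1 (hR_nonneg _)
      _ = (∑ i : Fin p, R (EuclideanSpace.single i 1)) * ‖u‖ := by
          rw [Finset.sum_mul]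
          exact Finset.sum_congr rfl fun i _ => mul_comm _ _
  set Δ := θhat - θs with hΔdef
  have hθhat : θhat = θs + Δ := by rw [hΔdef]; abel
  set ΔB := (Submodule.orthogonalProjectionOnto B Δ : EuclideanSpace ℝ (Fin p)) with hΔB
  set ΔP := (Submodule.orthogonalProjectionOnto Bᗮ Δ : EuclideanSpace ℝ (Fin p)) with hΔP
  have hsplit : ΔB + ΔP = Δ :=
    B.starProjection_add_starProjection_orthogonal Δ
  -- nonnegativity of Ψ-type quantities
  have hΨbdd : BddAbove {x : ℝ | ∃ u ∈ B, u ≠ 0 ∧ x = R u / ‖u‖} := by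
    refine ⟨C, fun x hx => ?_⟩
    obtain ⟨u, _, hu0, rfl⟩ := hx
    have hnu : (0:ℝ) < ‖u‖ := norm_pos_iff.mpr hu0
    rw [div_le_iff₀ hnu]
    exact hCub u
  have hΨRB : R ΔB ≤ Ψ * ‖Δ‖ ∧ 0 ≤ Ψ ∨ ΔB = 0 := by
    by_cases h : ΔB = 0
    · exact Or.inr h
    · left
      have hnb : (0:ℝ) < ‖ΔB‖ := norm_pos_iff.mpr h
      have hmem : R ΔB / ‖ΔB‖ ∈ {x : ℝ | ∃ u ∈ B, u ≠ 0 ∧ x = R u / ‖u‖} :=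
        ⟨ΔB, (Submodule.orthogonalProjectionOnto B Δ).2, h, rfl⟩
      have hle : R ΔB / ‖ΔB‖ ≤ Ψ := le_csSup hΨbdd hmem
      have hΨ0 : 0 ≤ Ψ := le_trans (div_nonneg (hR_nonneg _) hnb.le) hle
      have hBn : ‖ΔB‖ ≤ ‖Δ‖ := by
        have h1 := (Submodule.orthogonalProjectionOnto B).le_opNorm Δ
        have h2 := Submodule.orthogonalProjectionOnto_norm_le B
        have h3 : ‖Submodule.orthogonalProjectionOnto B Δ‖ = ‖ΔB‖ := rfl
        nlinarith [norm_nonneg Δ]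
      constructor
      · calc R ΔB = (R ΔB / ‖ΔB‖) * ‖ΔB‖ := by field_simp
          _ ≤ Ψ * ‖Δ‖ := by
              apply mul_le_mul hle hBn hnb.le hΨ0
      · exact hΨ0
  -- the dual norm bound
  set g := gradient L θs with hg
  set S : Set ℝ := {x : ℝ | ∃ u, R u ≤ 1 ∧ x = @inner ℝ _ _ u g} with hS
  -- lower bound m‖u‖ ≤ R u (needed for BddAbove S); trivial-space case separate
  have hdual : ∀ v, (inner ℝ v g : ℝ) ≤ sSup S * R v := by
    by_cases hE : ∀ u : EuclideanSpace ℝ (Fin p), u = 0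
    · intro v
      rw [hE v]
      have h0S : (0:ℝ) ∈ S := ⟨0, by rw [hR0]; norm_num, by simp⟩
      have hbdd : BddAbove S := by
        refine ⟨0, fun x hx => ?_⟩
        obtain ⟨u, _, rfl⟩ := hx
        rw [hE u]; simp
      have := le_csSup hbdd h0S
      have : 0 ≤ sSup S * R 0 := by
        rw [hR0]; simp
      simpa using this
    · push_neg at hE
      obtain ⟨u₀, hu₀⟩ := hE
      have : Nontrivial (EuclideanSpace ℝ (Fin p)) := ⟨u₀, 0, hu₀⟩
      -- R is continuous
      have hRcont : Continuous R := by
        have hlip : LipschitzWith (Real.toNNReal C) R := by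
          apply LipschitzWith.of_dist_le_mul
          intro x y
          rw [Real.dist_eq, Real.coe_toNNReal C hC0, dist_eq_norm]
          have hxy : R x ≤ R y + C * ‖x - y‖ := by
            have h1 := hR_add y (x - y)
            have h2 := hCub (x - y)
            have h3 : y + (x - y) = x := by abel
            rw [h3] at h1
            linarith
          have hyx : R y ≤ R x + C * ‖x - y‖ := by
            have h1 := hR_add x (y - x)
            have h2 := hCub (y - x)
            have h3 : x + (y - x) = y := by abel
            have h4 : ‖y - x‖ = ‖x - y‖ := norm_sub_rev y x
            rw [h3] at h1
            rw [h4] at h2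
            linarith
          rw [abs_le]
          constructor <;> linarith
        exact hlip.continuous
      obtain ⟨z, hz, hzmin'⟩ := (isCompact_sphere (0:EuclideanSpace ℝ (Fin p)) 1).exists_isMinOn
        (NormedSpace.sphere_nonempty.mpr zero_le_one) hRcont.continuousOn
      have hzmin : ∀ w ∈ Metric.sphere (0:EuclideanSpace ℝ (Fin p)) 1, R z ≤ R w :=
        fun w hw => hzmin' hw
      have hz1 : ‖z‖ = 1 := by simpa using hz
      have hzne : z ≠ 0 := by
        intro h; rw [h] at hz1; simp at hz1
      have hm0 : 0 < R z := by
        rcases lt_or_eq_of_le (hR_nonneg z) with h | h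
        · exact h
        · exact absurd ((hR_def z).mp h.symm) hzne
      have hmlb : ∀ u, R z * ‖u‖ ≤ R u := by
        intro u
        by_cases hu : u = 0
        · rw [hu]; simp [hR0]
        · have hnu : (0:ℝ) < ‖u‖ := norm_pos_iff.mpr hu
          have hmem : ‖u‖⁻¹ • u ∈ Metric.sphere (0:EuclideanSpace ℝ (Fin p)) 1 := by
            simp [norm_smul, abs_of_pos (inv_pos.mpr hnu), inv_mul_cancel₀ hnu.ne']
          have := hzmin _ hmem
          rw [hR_smul] at this
          rw [abs_of_pos (inv_pos.mpr hnu)] at this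
          calc R z * ‖u‖ ≤ (‖u‖⁻¹ * R u) * ‖u‖ :=
                mul_le_mul_of_nonneg_right this (norm_nonneg u)
            _ = R u := by field_simp
      have hbdd : BddAbove S := by
        refine ⟨‖g‖ / R z, fun x hx => ?_⟩
        obtain ⟨u, hu1, rfl⟩ := hx
        have h1 : (inner ℝ u g : ℝ) ≤ ‖u‖ * ‖g‖ := real_inner_le_norm u g
        have h2 := hmlb u
        rw [le_div_iff₀ hm0]
        nlinarith [norm_nonneg g, norm_nonneg u]
      intro v
      by_cases hv : R v = 0
      · have hv' : v = 0 := (hR_def v).mp hv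
        rw [hv', hR0]
        simp
      · have hv0 : 0 < R v := lt_of_le_of_ne (hR_nonneg v) (Ne.symm hv)
        have hmem : (inner ℝ ((R v)⁻¹ • v) g : ℝ) ∈ S := by
          refine ⟨(R v)⁻¹ • v, ?_, rfl⟩
          rw [hR_smul, abs_of_pos (inv_pos.mpr hv0), inv_mul_cancel₀ hv0.ne']
        have hle := le_csSup hbdd hmem
        have h2 : (inner ℝ ((R v)⁻¹ • v) g : ℝ) = (R v)⁻¹ * (inner ℝ v g : ℝ) := by
          rw [real_inner_smul_left]
        rw [h2] at hle
        calc (inner ℝ v g : ℝ) = R v * ((R v)⁻¹ * (inner ℝ v g : ℝ)) := by field_simp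
          _ ≤ R v * sSup S := mul_le_mul_of_nonneg_left hle hv0.le
          _ = sSup S * R v := mul_comm _ _
  have hsup_le : sSup S ≤ lam / 2 := by linarith
  -- key inequality from the gradient / duality: -⟪g, w⟫ ≤ (lam/2) * R w
  have hdual' : ∀ w, -(inner ℝ g w : ℝ) ≤ (lam / 2) * R w := by
    intro w
    have h1 : -(inner ℝ g w : ℝ) = (inner ℝ (-w) g : ℝ) := by
      rw [real_inner_comm]; simp
    rw [h1]
    calc (inner ℝ (-w) g : ℝ) ≤ sSup S * R (-w) := hdual (-w)
      _ = sSup S * R w := by rw [hRneg]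
      _ ≤ (lam / 2) * R w := mul_le_mul_of_nonneg_right hsup_le (hR_nonneg w)
  -- convexity gradient inequality
  have hgrad_ineq : (inner ℝ g Δ : ℝ) ≤ L θhat - L θs := by
    have h := aux_convex_grad hconv hdiff θs θhat
    rw [hg, hΔdef]
    exact h
  -- basic minimality
  have hmin' : L θhat + lam * R θhat ≤ L θs + lam * R θs := hmin θs
  -- decomposability bounds
  have hdec1 : R (θs + ΔP) = R θs + R ΔP :=
    hdecomp θs hθs ΔP (Submodule.orthogonalProjectionOnto Bᗮ Δ).2
  have hRhat_lb : R θs + R ΔP - R ΔB ≤ R θhat := by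
    have he : θs + ΔP = θhat + (-ΔB) := by
      rw [hθhat, ← hsplit]; abel
    have h1 := hR_add θhat (-ΔB)
    rw [← he, hdec1, hRneg] at h1
    linarith
  have hRΔ_ub : R Δ ≤ R ΔB + R ΔP := by
    have := hR_add ΔB ΔP
    rwa [hsplit] at this
  have e2 : (lam / 2) * R Δ ≤ (lam / 2) * (R ΔB + R ΔP) :=
    mul_le_mul_of_nonneg_left hRΔ_ub (by linarith)
  have h3 : -(inner ℝ g Δ : ℝ) ≤ (lam / 2) * (R ΔB + R ΔP) := le_trans (hdual' Δ) e2
  -- cone condition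
  have hcone : R ΔP ≤ 3 * R ΔB := by
    have h1 : lam * (R θhat - R θs) ≤ L θs - L θhat := by linarith
    have h2 : L θs - L θhat ≤ -(inner ℝ g Δ : ℝ) := by linarith
    have e1 : lam * (R ΔP - R ΔB) ≤ lam * (R θhat - R θs) :=
      mul_le_mul_of_nonneg_left (by linarith [hRhat_lb]) hlam_pos.le
    have hfin : (lam / 2) * R ΔP ≤ (lam / 2) * (3 * R ΔB) := by linarith
    exact le_of_mul_le_mul_left hfin (by positivity)
  -- RSC
  have hrsc := hRSC Δ hcone
  rw [← hθhat] at hrsc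
  -- assemble
  have hLhat : L θhat - L θs ≤ lam * (R ΔB - R ΔP) := by
    have e3 : lam * (R θs - R θhat) ≤ lam * (R ΔB - R ΔP) :=
      mul_le_mul_of_nonneg_left (by linarith [hRhat_lb]) hlam_pos.le
    linarith [hmin']
  have hkey : κ * ‖Δ‖ ^ 2 ≤ (3 / 2) * lam * R ΔB := by
    have e4 : 0 ≤ (lam / 2) * R ΔP := mul_nonneg (by linarith) (hR_nonneg _)
    linarith [hrsc]
  rcases hΨRB with ⟨hRBle, hΨ0⟩ | hB0
  · -- main case
    have hkey2 : κ * ‖Δ‖ ^ 2 ≤ (3 / 2) * lam * Ψ * ‖Δ‖ := by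
      have e5 : (3 / 2) * lam * R ΔB ≤ (3 / 2) * lam * (Ψ * ‖Δ‖) :=
        mul_le_mul_of_nonneg_left hRBle (by linarith)
      calc κ * ‖Δ‖ ^ 2 ≤ (3 / 2) * lam * R ΔB := hkey
        _ ≤ (3 / 2) * lam * (Ψ * ‖Δ‖) := e5
        _ = (3 / 2) * lam * Ψ * ‖Δ‖ := by ring
    have hnΔ : ‖Δ‖ ≤ (3 / 2) * (lam / κ) * Ψ := by
      by_cases h : ‖Δ‖ = 0
      · rw [h]; positivity
      · have hpos : 0 < ‖Δ‖ := lt_of_le_of_ne (norm_nonneg Δ) (Ne.symm h)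
        have h6 : (κ * ‖Δ‖) * ‖Δ‖ ≤ ((3 / 2) * lam * Ψ) * ‖Δ‖ := by
          have : κ * ‖Δ‖ ^ 2 = (κ * ‖Δ‖) * ‖Δ‖ := by ring
          linarith [hkey2]
        have h7 : κ * ‖Δ‖ ≤ (3 / 2) * lam * Ψ := le_of_mul_le_mul_right h6 hpos
        rw [show (3 / 2 : ℝ) * (lam / κ) * Ψ = ((3 / 2) * lam * Ψ) / κ by field_simp]
        rw [le_div_iff₀ hκ]
        linarith
    constructor
    · have h1 : ‖Δ‖ ^ 2 ≤ ((3 / 2) * (lam / κ) * Ψ) ^ 2 := by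
        nlinarith [norm_nonneg Δ]
      have h2 : ((3 / 2) * (lam / κ) * Ψ) ^ 2 = (9 / 4) * (lam ^ 2 / κ ^ 2) * Ψ ^ 2 := by
        field_simp; ring
      have h3 : (9 / 4 : ℝ) * (lam ^ 2 / κ ^ 2) * Ψ ^ 2 ≤ 9 * (lam ^ 2 / κ ^ 2) * Ψ ^ 2 := by
        have : (0:ℝ) ≤ (lam ^ 2 / κ ^ 2) * Ψ ^ 2 := by positivity
        nlinarith
      calc ‖Δ‖ ^ 2 ≤ _ := h1
        _ = _ := h2
        _ ≤ _ := h3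
    · have h1 : R Δ ≤ 4 * R ΔB := by linarith
      have h2 : R ΔB ≤ Ψ * ((3 / 2) * (lam / κ) * Ψ) := by
        nlinarith
      have h3 : Ψ * ((3 / 2) * (lam / κ) * Ψ) = (3 / 2) * (lam / κ) * Ψ ^ 2 := by ring
      have h4 : 4 * ((3 / 2) * (lam / κ) * Ψ ^ 2) ≤ 12 * (lam / κ) * Ψ ^ 2 := by
        nlinarith [sq_nonneg Ψ, div_nonneg hlam_pos.le hκ.le]
      nlinarith
  · -- ΔB = 0 ⇒ Δ = 0
    have hRB0 : R ΔB = 0 := by rw [hB0]; exact hR0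
    have hΔ0 : Δ = 0 := by
      have h1 : κ * ‖Δ‖ ^ 2 ≤ 0 := by nlinarith
      have h2 : ‖Δ‖ ^ 2 ≤ 0 := by nlinarith
      have h3 : ‖Δ‖ = 0 := by nlinarith [norm_nonneg Δ, sq_nonneg ‖Δ‖]
      exact norm_eq_zero.mp h3
    rw [hΔ0]
    constructor
    · simp only [norm_zero]
      rw [show (0:ℝ) ^ 2 = 0 by ring]
      positivity
    · rw [hR0]
      positivity
end

section
/- Let R be a norm on ℝ^p with subspace compatibility constant Ψ(B̄) = sup{R(u)/‖u‖₂ : u ∈ B̄, u ≠ 0} for a subspace B̄, and suppose θ* ∈ M ⊆ B̄ and Δ satisfies R(Π_{B^⊥}Δ) ≤ 3R(Π_{B̄}Δ). Then R(Δ) ≤ 4Ψ(B̄)‖Δ‖₂. Consequently, if δL(Δ) ≥ κ₁‖Δ‖₂² − κ₂ g(n,p) R(Δ)² holds, then δL(Δ) ≥ (κ₁ − 16κ₂ Ψ(B̄)² g(n,p)) ‖Δ‖₂². -/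
-- aux: R of finset sum
lemma R_sum_le {p : ℕ} (R : EuclideanSpace ℝ (Fin p) → ℝ)
    (hR0 : R 0 = 0)
    (hR_add : ∀ x y, R (x + y) ≤ R x + R y)
    (s : Finset (Fin p)) (f : Fin p → EuclideanSpace ℝ (Fin p)) :
    R (∑ i ∈ s, f i) ≤ ∑ i ∈ s, R (f i) := by
  classical
  induction s using Finset.induction with
  | empty => simp [hR0]
  | insert _ _ hx ih =>
      rename_i a s
      rw [Finset.sum_insert hx, Finset.sum_insert hx]
      exact le_trans (hR_add _ _) (by linarith)

lemma R_bound {p : ℕ} (R : EuclideanSpace ℝ (Fin p) → ℝ)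
    (hR0 : R 0 = 0)
    (hR_add : ∀ x y, R (x + y) ≤ R x + R y)
    (hR_smul : ∀ (c : ℝ) (x), R (c • x) = |c| * R x)
    (hR_nonneg : ∀ x, 0 ≤ R x) :
    ∃ C : ℝ, 0 ≤ C ∧ ∀ x, R x ≤ C * ‖x‖ := by
  classical
  refine ⟨∑ i : Fin p, R (EuclideanSpace.single i 1), Finset.sum_nonneg fun i _ => hR_nonneg _, ?_⟩
  intro x
  have hx : x = ∑ i : Fin p, x i • EuclideanSpace.single i (1:ℝ) := by
    ext j
    rw [show ((∑ i : Fin p, x i • EuclideanSpace.single i (1:ℝ)) j) = ∑ i : Fin p, (x i • EuclideanSpace.single i (1:ℝ)) j from by rw [WithLp.ofLp_sum]; exact Finset.sum_apply j Finset.univ _]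
    simp [EuclideanSpace.single_apply]
  calc R x = R (∑ i : Fin p, x i • EuclideanSpace.single i (1:ℝ)) := by rw [← hx]
    _ ≤ ∑ i : Fin p, R (x i • EuclideanSpace.single i (1:ℝ)) :=
        R_sum_le R hR0 hR_add _ _
    _ = ∑ i : Fin p, |x i| * R (EuclideanSpace.single i (1:ℝ)) := by
        simp [hR_smul]
    _ ≤ ∑ i : Fin p, ‖x‖ * R (EuclideanSpace.single i (1:ℝ)) := by
        refine Finset.sum_le_sum fun i _ => ?_
        have : |x i| ≤ ‖x‖ := by
          have := EuclideanSpace.norm_eq x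
          nlinarith [Finset.single_le_sum (f := fun j => ‖x j‖^2)
            (fun j _ => sq_nonneg ‖x j‖) (Finset.mem_univ i),
            Real.sq_sqrt (Finset.sum_nonneg (fun j (_: j ∈ Finset.univ) => sq_nonneg ‖x j‖)),
            abs_nonneg (x i), norm_nonneg x, Real.norm_eq_abs (x i)]
        exact mul_le_mul_of_nonneg_right this (hR_nonneg _)
    _ = (∑ i : Fin p, R (EuclideanSpace.single i 1)) * ‖x‖ := by
        rw [Finset.sum_mul]; exact Finset.sum_congr rfl fun i _ => mul_comm _ _

/-- If `θ* ∈ M ⊆ B` and `Δ` satisfies `R(Π_{Bᗮ}Δ) ≤ 3R(Π_B Δ)`, then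
`R(Δ) ≤ 4Ψ(B)‖Δ‖`; consequently any lower bound
`δL ≥ κ₁‖Δ‖² − κ₂ g R(Δ)²` implies `δL ≥ (κ₁ − 16κ₂Ψ(B)²g)‖Δ‖²`. -/
theorem compatibility_implies_rsc (p : ℕ) (R : EuclideanSpace ℝ (Fin p) → ℝ)
    (hR_nonneg : ∀ x, 0 ≤ R x)
    (hR_add : ∀ x y, R (x + y) ≤ R x + R y)
    (hR_smul : ∀ (c : ℝ) (x), R (c • x) = |c| * R x)
    (hR_def : ∀ x, R x = 0 ↔ x = 0)
    (M B : Submodule ℝ (EuclideanSpace ℝ (Fin p))) (hMB : M ≤ B)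
    (θs : EuclideanSpace ℝ (Fin p)) (hθs : θs ∈ M)
    (Δ : EuclideanSpace ℝ (Fin p))
    (hΔ : R ((Submodule.orthogonalProjection Bᗮ Δ : EuclideanSpace ℝ (Fin p))) ≤
      3 * R ((Submodule.orthogonalProjection B Δ : EuclideanSpace ℝ (Fin p)))) :
    R Δ ≤ 4 * sSup {x : ℝ | ∃ u ∈ B, u ≠ 0 ∧ x = R u / ‖u‖} * ‖Δ‖ ∧
      ∀ δL κ₁ κ₂ g : ℝ, 0 ≤ κ₂ → 0 ≤ g →
        δL ≥ κ₁ * ‖Δ‖ ^ 2 - κ₂ * g * (R Δ) ^ 2 →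
        δL ≥ (κ₁ - 16 * κ₂ *
            (sSup {x : ℝ | ∃ u ∈ B, u ≠ 0 ∧ x = R u / ‖u‖}) ^ 2 * g) *
          ‖Δ‖ ^ 2 := by
  classical
  have hR0 : R 0 = 0 := by
    have := hR_smul 0 0; simpa using this
  obtain ⟨C, hC0, hC⟩ := R_bound R hR0 hR_add hR_smul hR_nonneg
  set S : Set ℝ := {x : ℝ | ∃ u ∈ B, u ≠ 0 ∧ x = R u / ‖u‖} with hS
  set Ψ := sSup S with hΨ
  have hbdd : BddAbove S := by
    refine ⟨C, fun x hx => ?_⟩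
    obtain ⟨u, _, hu0, rfl⟩ := hx
    rw [div_le_iff₀ (norm_pos_iff.mpr hu0)]
    exact hC u
  -- key: for u ∈ B, R u ≤ Ψ * ‖u‖
  have key : ∀ u ∈ B, R u ≤ Ψ * ‖u‖ := by
    intro u huB
    by_cases hu : u = 0
    · simp [hu, hR0]
    · have hmem : R u / ‖u‖ ∈ S := ⟨u, huB, hu, rfl⟩
      have := le_csSup hbdd hmem
      have hn : (0:ℝ) < ‖u‖ := norm_pos_iff.mpr hu
      calc R u = (R u / ‖u‖) * ‖u‖ := by field_simp
        _ ≤ Ψ * ‖u‖ := mul_le_mul_of_nonneg_right this hn.le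
  have hΨ0 : 0 ≤ Ψ := by
    rcases Set.eq_empty_or_nonempty S with h | h
    · simp [hΨ, h, Real.sSup_empty]
    · obtain ⟨x, hx⟩ := h
      refine le_trans ?_ (le_csSup hbdd hx)
      obtain ⟨u, _, hu0, rfl⟩ := hx
      exact div_nonneg (hR_nonneg u) (norm_nonneg u)
  have hdecomp := Submodule.starProjection_add_starProjection_orthogonal (K := B) Δ
  set a : EuclideanSpace ℝ (Fin p) := (Submodule.orthogonalProjection B Δ : EuclideanSpace ℝ (Fin p))
  set b : EuclideanSpace ℝ (Fin p) := (Submodule.orthogonalProjection Bᗮ Δ : EuclideanSpace ℝ (Fin p))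
  have hRa : R a ≤ Ψ * ‖a‖ := key a (Submodule.orthogonalProjection B Δ).2
  have hnorm : ‖a‖ ≤ ‖Δ‖ := by
    have := Submodule.norm_sq_eq_add_norm_sq_projection Δ B
    simp only [Submodule.coe_norm] at this ⊢
    nlinarith [norm_nonneg a, norm_nonneg Δ,
      norm_nonneg ((Submodule.orthogonalProjection Bᗮ Δ : EuclideanSpace ℝ (Fin p)))]
  have main : R Δ ≤ 4 * Ψ * ‖Δ‖ := by
    have h1 : R Δ ≤ R a + R b := by
      rw [← hdecomp]; exact hR_add a b
    have h2 : Ψ * ‖a‖ ≤ Ψ * ‖Δ‖ := mul_le_mul_of_nonneg_left hnorm hΨ0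
    nlinarith
  refine ⟨main, fun δL κ₁ κ₂ g hκ₂ hg h => ?_⟩
  have hRΔ : 0 ≤ R Δ := hR_nonneg Δ
  have hsq : (R Δ)^2 ≤ 16 * Ψ^2 * ‖Δ‖^2 := by nlinarith [norm_nonneg Δ]
  nlinarith [mul_nonneg (mul_nonneg hκ₂ hg) (sub_nonneg.2 hsq), mul_nonneg hκ₂ hg]
end
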